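/- Let G₀ be a topological group, let T be a universal compact Hausdorff G₀-space, let x ∈ T, and let G = Stab(x) = {g ∈ G₀ | g·x = x} be the stabilizer subgroup of x. Then T is minimal if and only if Fix(G) = {y ∈ T | ∀ g ∈ G, g·y = y} is transitive with respect to T, i.e., for every y ∈ Fix(G) the orbit closure of y under G₀ equals T. -/

import Mathlib

/-- A `G`-space `X` is *minimal* if `X` is nonempty and the only closed `G`-invariant
subsets of `X` are `∅` and `X`. -/
def IsMinimalSpace (G : Type) (X : Type) [Group G] [TopologicalSpace X] [MulAction G X] :
    Prop :=
  Nonempty X ∧ ∀ S : Set X, IsClosed S → (∀ g : G, ∀ x ∈ S, g • x ∈ S) →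
    S = ∅ ∨ S = Set.univ

/-- A `G`-space `X` is *universal* if every minimal compact Hausdorff `G`-space `Y` is a
continuous `G`-equivariant surjective image of `X`. -/
def IsUniversalSpace (G : Type) [Group G] [TopologicalSpace G] (X : Type)
    [TopologicalSpace X] [MulAction G X] : Prop :=
  ∀ (Y : Type) [TopologicalSpace Y] [CompactSpace Y] [T2Space Y] [MulAction G Y]
    [ContinuousSMul G Y], IsMinimalSpace G Y →
      ∃ f : X → Y, Continuous f ∧ Function.Surjective f ∧
        ∀ (g : G) (x : X), f (g • x) = g • f x

/-- Existence of a minimal closed invariant subset of a nonempty closed invariant set. -/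
lemma exists_minimal_closed_invariant (G₀ : Type) [Group G₀] (T : Type) [TopologicalSpace T]
    [CompactSpace T] [T2Space T] [MulAction G₀ T]
    (S : Set T) (hS : IsClosed S) (hinv : ∀ g : G₀, ∀ t ∈ S, g • t ∈ S) (hne : S.Nonempty) :
    ∃ M ⊆ S, M.Nonempty ∧ IsClosed M ∧ (∀ g : G₀, ∀ t ∈ M, g • t ∈ M) ∧
      ∀ N ⊆ M, N.Nonempty → IsClosed N → (∀ g : G₀, ∀ t ∈ N, g • t ∈ N) → N = M := by
  set 𝒮 : Set (Set T) :=
    {A | A.Nonempty ∧ IsClosed A ∧ (∀ g : G₀, ∀ t ∈ A, g • t ∈ A) ∧ A ⊆ S} with h𝒮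
  have hzorn : ∀ c ⊆ 𝒮, IsChain (fun x1 x2 => x1 ⊆ x2) c → c.Nonempty →
      ∃ lb ∈ 𝒮, ∀ s ∈ c, lb ⊆ s := by
    intro c hc hchain hcne
    haveI : Nonempty c := hcne.to_subtype
    have hdir : Directed (fun x1 x2 => x1 ⊇ x2) (fun A : c => (A : Set T)) := by
      intro A B
      rcases hchain.total A.2 B.2 with h | h
      · exact ⟨A, subset_rfl, h⟩
      · exact ⟨B, h, subset_rfl⟩
    have hne' : (⋂ A : c, (A : Set T)).Nonempty :=
      IsCompact.nonempty_iInter_of_directed_nonempty_isCompact_isClosed _ hdir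
        (fun A => (hc A.2).1) (fun A => (hc A.2).2.1.isCompact) (fun A => (hc A.2).2.1)
    obtain ⟨A₀⟩ := ‹Nonempty c›
    refine ⟨⋂ A : c, (A : Set T), ⟨hne', isClosed_iInter fun A => (hc A.2).2.1, ?_, ?_⟩, ?_⟩
    · intro g t ht
      exact Set.mem_iInter.2 fun A => (hc A.2).2.2.1 g t (Set.mem_iInter.1 ht A)
    · exact (Set.iInter_subset _ A₀).trans (hc A₀.2).2.2.2
    · intro s hs
      exact Set.iInter_subset (fun A : c => (A : Set T)) ⟨s, hs⟩
  obtain ⟨M, hMS, hMmem, hMmin⟩ :=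
    zorn_superset_nonempty 𝒮 hzorn S ⟨hne, hS, hinv, subset_rfl⟩
  refine ⟨M, hMS, hMmem.1, hMmem.2.1, hMmem.2.2.1, ?_⟩
  intro N hNM hNne hNcl hNinv
  exact hNM.antisymm (hMmin ⟨hNne, hNcl, hNinv, hNM.trans hMS⟩ hNM)

theorem universal_minimal_iff_fixedPoints_transitive
    (G₀ : Type) [Group G₀] [TopologicalSpace G₀] [IsTopologicalGroup G₀]
    (T : Type) [TopologicalSpace T] [CompactSpace T] [T2Space T] [MulAction G₀ T]
    [ContinuousSMul G₀ T] (huniv : IsUniversalSpace G₀ T) (x : T) :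
    IsMinimalSpace G₀ T ↔
      ∀ y : T, (∀ g : G₀, g • x = x → g • y = y) →
        closure (MulAction.orbit G₀ y) = Set.univ := by
  have orbit_closure_inv : ∀ (y : T) (g : G₀), ∀ z ∈ closure (MulAction.orbit G₀ y),
      g • z ∈ closure (MulAction.orbit G₀ y) := by
    intro y g z hz
    have h1 : g • z ∈ (fun t : T => g • t) '' closure (MulAction.orbit G₀ y) :=
      Set.mem_image_of_mem _ hz
    have h2 := image_closure_subset_closure_image (continuous_const_smul g) h1
    rwa [Set.image_smul, MulAction.smul_orbit] at h2
  constructor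
  · rintro ⟨hne, hmin⟩ y _
    rcases hmin (closure (MulAction.orbit G₀ y)) isClosed_closure (orbit_closure_inv y)
      with h | h
    · exact absurd (h ▸ subset_closure (MulAction.mem_orbit_self y)) (Set.notMem_empty y)
    · exact h
  · intro h
    refine ⟨⟨x⟩, ?_⟩
    intro S hScl hSinv
    rcases S.eq_empty_or_nonempty with hSe | hSne
    · exact Or.inl hSe
    right
    obtain ⟨M, hMS, hMne, hMcl, hMinv, hMmin⟩ :=
      exists_minimal_closed_invariant G₀ T S hScl hSinv hSne
    -- Build the subtype G₀-space on M
    set s : SubMulAction G₀ T := ⟨M, fun {g} {t} ht => hMinv g t ht⟩ with hs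
    haveI : CompactSpace s := isCompact_iff_compactSpace.mp (hMcl.isCompact)
    haveI : ContinuousSMul G₀ s := by
      constructor
      apply continuous_induced_rng.2
      have : ((↑) : s → T) ∘ (fun p : G₀ × s => p.1 • p.2) =
          fun p : G₀ × s => p.1 • (p.2 : T) := rfl
      rw [this]
      exact continuous_smul.comp (continuous_fst.prodMk (continuous_subtype_val.comp
        continuous_snd))
    have hMminSpace : IsMinimalSpace G₀ s := by
      refine ⟨⟨⟨hMne.choose, hMne.choose_spec⟩⟩, ?_⟩
      intro C hCcl hCinv
      rcases C.eq_empty_or_nonempty with hCe | hCne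
      · exact Or.inl hCe
      right
      have hCcomp : IsCompact C := hCcl.isCompact
      have himg : IsClosed (((↑) : s → T) '' C) :=
        (hCcomp.image continuous_subtype_val).isClosed
      have himginv : ∀ g : G₀, ∀ t ∈ ((↑) : s → T) '' C, g • t ∈ ((↑) : s → T) '' C := by
        rintro g t ⟨c, hc, rfl⟩
        exact ⟨g • c, hCinv g c hc, rfl⟩
      have himgsub : ((↑) : s → T) '' C ⊆ M := by
        rintro t ⟨c, _, rfl⟩; exact c.2
      have heq : ((↑) : s → T) '' C = M :=
        hMmin _ himgsub (hCne.image _) himg himginv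
      ext c
      simp only [Set.mem_univ, iff_true]
      have : (c : T) ∈ ((↑) : s → T) '' C := heq ▸ c.2
      obtain ⟨c', hc', hcc⟩ := this
      rwa [Subtype.val_injective hcc] at hc'
    obtain ⟨f, _, _, hequiv⟩ := huniv s hMminSpace
    set z : T := (f x : T) with hz
    have hzfix : ∀ g : G₀, g • x = x → g • z = z := by
      intro g hg
      have : f (g • x) = g • f x := hequiv g x
      rw [hg] at this
      calc g • z = ((g • f x : s) : T) := rfl
        _ = ((f x : s) : T) := by rw [← this]
    have hcl := h z hzfix
    have horb : MulAction.orbit G₀ z ⊆ M := by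
      rintro t ⟨g, rfl⟩
      exact hMinv g z (f x).2
    have : (Set.univ : Set T) ⊆ M := by
      rw [← hcl]
      exact closure_minimal horb hMcl
    exact (Set.subset_univ S).antisymm (this.trans hMS)
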